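/- arXiv:1503.04753 — 2 statements merged into one kernel-verified Lean document; each statement's English description precedes it below -/
import Mathlib

section
/- Let G = (V,E,c) be an edge-weighted directed graph without negative-weight closed walks, and let G̃ be its condensation: nodes are representatives v_1,...,v_K of the ∼-equivalence classes, with an edge (v_i,v_j) whenever some edge of G goes from class [v_i] to class [v_j] (i ≠ j), weighted by c̃_{v_i v_j} = min over edges (u,v) from [v_i] to [v_j] of (d_{v_i u} + c_{uv} + d_{v v_j}). Then every cycle of G̃ has strictly positive weight. -/
/-- `l` is a walk in edge set `E`: a nonempty list of vertices with consecutive edges. -/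
def IsWalk {V : Type*} (E : Set (V × V)) (l : List V) : Prop :=
  l ≠ [] ∧ l.Chain' (fun a b => (a, b) ∈ E)

/-- The weight of a walk: sum of edge weights along consecutive pairs (with multiplicity). -/
def walkWeight {V : Type*} (c : V → V → ℝ) (l : List V) : ℝ :=
  ((l.zip l.tail).map fun p => c p.1 p.2).sum

/-- `l` is a walk from `u` to `v`. -/
def IsWalkFrom {V : Type*} (E : Set (V × V)) (u v : V) (l : List V) : Prop :=
  IsWalk E l ∧ l.head? = some u ∧ l.getLast? = some v

/-- A closed walk: a walk with at least one edge whose first and last vertices agree. -/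
def IsClosedWalk {V : Type*} (E : Set (V × V)) (l : List V) : Prop :=
  IsWalk E l ∧ 2 ≤ l.length ∧ l.head? = l.getLast?

/-- A simple path from `u` to `v`: a walk with all traversed vertices distinct. -/
def IsPathFrom {V : Type*} (E : Set (V × V)) (u v : V) (l : List V) : Prop :=
  IsWalkFrom E u v l ∧ l.Nodup

/-- A cycle: a closed walk all of whose vertices other than the repeated endpoint are distinct. -/
def IsCycle {V : Type*} (E : Set (V × V)) (l : List V) : Prop :=
  IsClosedWalk E l ∧ l.tail.Nodup

/-- `x` satisfies the precedence relation system of `(V, E, c)`. -/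
def Satisfies {V : Type*} (E : Set (V × V)) (c : V → V → ℝ) (x : V → ℝ) : Prop :=
  ∀ e ∈ E, x e.1 - x e.2 ≤ c e.1 e.2

/-- `R` is a redundant edge set of `(V, E, c)`: every edge of `R` has a replacement path
in the reduced graph of no greater weight. -/
def IsRedundantEdgeSet {V : Type*} (E : Set (V × V)) (c : V → V → ℝ)
    (R : Set (V × V)) : Prop :=
  R ⊆ E ∧ ∀ e ∈ R, ∃ l, IsPathFrom (E \ R) e.1 e.2 l ∧ walkWeight c l ≤ c e.1 e.2

/-- `w` is the minimum weight of a walk from `i` to `j` in `(V, E, c)` (attained). -/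
def IsMinWalkWeight {V : Type*} (E : Set (V × V)) (c : V → V → ℝ) (i j : V) (w : ℝ) : Prop :=
  (∃ l, IsWalkFrom E i j l ∧ walkWeight c l = w) ∧
  ∀ l, IsWalkFrom E i j l → w ≤ walkWeight c l

/-- The relation `∼`: `i ∼ j` iff `i = j` or some zero-weight closed walk traverses both. -/
def Sim {V : Type*} (E : Set (V × V)) (c : V → V → ℝ) (i j : V) : Prop :=
  i = j ∨ ∃ l, IsClosedWalk E l ∧ walkWeight c l = 0 ∧ i ∈ l ∧ j ∈ l


lemma walkWeight_cons_cons {V : Type*} (c : V → V → ℝ) (a b : V) (t : List V) :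
    walkWeight c (a :: b :: t) = c a b + walkWeight c (b :: t) := by
  simp [walkWeight]

lemma mem_of_head?_eq {α : Type*} {l : List α} {x : α} (h : l.head? = some x) : x ∈ l := by
  cases l with
  | nil => simp at h
  | cons a t => simp at h; simp [h]

lemma mem_of_getLast?_eq {α : Type*} {l : List α} {x : α} (h : l.getLast? = some x) : x ∈ l := by
  obtain ⟨hne, hx⟩ := List.mem_getLast?_eq_getLast (by rw [h]; rfl)
  rw [hx]; exact List.getLast_mem hne

lemma walk_concat {V : Type*} {E : Set (V × V)} {c : V → V → ℝ} :
    ∀ {l1 l2 : List V} {u v w : V}, IsWalkFrom E u v l1 → IsWalkFrom E v w l2 →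
    IsWalkFrom E u w (l1 ++ l2.tail) ∧
      walkWeight c (l1 ++ l2.tail) = walkWeight c l1 + walkWeight c l2 := by
  intro l1
  induction l1 with
  | nil => intro l2 u v w h1 _; exact absurd rfl h1.1.1
  | cons a t ih =>
    intro l2 u v w h1 h2
    obtain ⟨⟨-, hch⟩, hh, hl⟩ := h1
    simp at hh; subst hh
    match t with
    | [] =>
      simp [List.getLast?] at hl; subst hl
      obtain ⟨⟨hne2, hch2⟩, hh2, hl2⟩ := h2
      match l2, hne2 with
      | b :: t2, _ =>
        simp at hh2; subst hh2
        refine ⟨⟨⟨by simp, ?_⟩, by simp, ?_⟩, ?_⟩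
        · exact hch2
        · simpa using hl2
        · simp [walkWeight]
    | b :: t' =>
      have hedge : (a, b) ∈ E := (List.isChain_cons_cons.mp hch).1
      have h1' : IsWalkFrom E b v (b :: t') :=
        ⟨⟨by simp, (List.isChain_cons_cons.mp hch).2⟩, rfl, by
          rw [← hl]; simp [List.getLast?_cons_cons]⟩
      obtain ⟨⟨⟨hne', hch'⟩, hh', hl'⟩, hw'⟩ := ih h1' h2
      refine ⟨⟨⟨by simp, ?_⟩, rfl, ?_⟩, ?_⟩
      · show List.Chain' _ (a :: b :: (t' ++ l2.tail))
        exact List.isChain_cons_cons.mpr ⟨hedge, hch'⟩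
      · show (a :: b :: (t' ++ l2.tail)).getLast? = some w
        rw [List.getLast?_cons_cons]; exact hl'
      · show walkWeight c (a :: b :: (t' ++ l2.tail)) = _
        rw [walkWeight_cons_cons, walkWeight_cons_cons]
        have : walkWeight c (b :: (t' ++ l2.tail)) = walkWeight c (b :: t') + walkWeight c l2 := hw'
        rw [this]; ring

lemma edge_walk {V : Type*} {ι : Type*} {E : Set (V × V)} {c : V → V → ℝ}
    {vr : ι → V} {Et : Set (ι × ι)} {ct : ι → ι → ℝ}
    (hct : ∀ k q : ι, (k, q) ∈ Et →
      IsLeast { w : ℝ | ∃ u v : V, (u, v) ∈ E ∧ Sim E c u (vr k) ∧ Sim E c v (vr q) ∧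
        ∃ a b : ℝ, IsMinWalkWeight E c (vr k) u a ∧ IsMinWalkWeight E c v (vr q) b ∧
          w = a + c u v + b } (ct k q))
    {k q : ι} (hkq : (k, q) ∈ Et) :
    ∃ W, IsWalkFrom E (vr k) (vr q) W ∧ walkWeight c W = ct k q ∧ 2 ≤ W.length := by
  obtain ⟨u, v, huv, -, -, a, b, ha, hb, hw⟩ := (hct k q hkq).1
  obtain ⟨la, hla, hwa⟩ := ha.1
  obtain ⟨lb, hlb, hwb⟩ := hb.1
  have huvw : IsWalkFrom E u v [u, v] := ⟨⟨by simp, List.isChain_pair.mpr huv⟩, rfl, rfl⟩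
  obtain ⟨h1, hw1⟩ := walk_concat (c := c) hla huvw
  obtain ⟨h2, hw2⟩ := walk_concat (c := c) h1 hlb
  refine ⟨_, h2, ?_, ?_⟩
  · rw [hw2, hw1, hwa, hwb, hw]
    have : walkWeight c [u, v] = c u v := by simp [walkWeight]
    rw [this]
  · have : 2 ≤ (la ++ [u, v].tail).length := by
      have := hla.1.1
      cases la with
      | nil => exact absurd rfl this
      | cons x t => simp
    calc 2 ≤ (la ++ [u, v].tail).length := this
      _ ≤ _ := by simp

lemma list_walk {V : Type*} {ι : Type*} {E : Set (V × V)} {c : V → V → ℝ}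
    {vr : ι → V} {Et : Set (ι × ι)} {ct : ι → ι → ℝ}
    (hct : ∀ k q : ι, (k, q) ∈ Et →
      IsLeast { w : ℝ | ∃ u v : V, (u, v) ∈ E ∧ Sim E c u (vr k) ∧ Sim E c v (vr q) ∧
        ∃ a b : ℝ, IsMinWalkWeight E c (vr k) u a ∧ IsMinWalkWeight E c v (vr q) b ∧
          w = a + c u v + b } (ct k q)) :
    ∀ (t : List ι) (k q : ι), List.Chain' (fun a b => (a, b) ∈ Et) (k :: t) →
      (k :: t).getLast? = some q →
      ∃ W, IsWalkFrom E (vr k) (vr q) W ∧ walkWeight c W = walkWeight ct (k :: t) := by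
  intro t
  induction t with
  | nil =>
    intro k q _ hlast
    simp [List.getLast?] at hlast; subst hlast
    exact ⟨[vr k], ⟨⟨by simp, List.isChain_singleton _⟩, rfl, rfl⟩, by simp [walkWeight]⟩
  | cons b t' ih =>
    intro k q hch hlast
    have hedge : (k, b) ∈ Et := (List.isChain_cons_cons.mp hch).1
    obtain ⟨We, hWe, hwe, -⟩ := edge_walk hct hedge
    obtain ⟨Wr, hWr, hwr⟩ := ih b q (List.isChain_cons_cons.mp hch).2
      (by rw [← hlast, List.getLast?_cons_cons])
    obtain ⟨hW, hw⟩ := walk_concat (c := c) hWe hWr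
    exact ⟨_, hW, by rw [hw, hwe, hwr, walkWeight_cons_cons]⟩

theorem stmt14 {V : Type*} {ι : Type*} (E : Set (V × V)) (c : V → V → ℝ)
    (hnn : ∀ l : List V, IsClosedWalk E l → 0 ≤ walkWeight c l)
    (vr : ι → V)
    (hrep : ∀ x : V, ∃! k : ι, Sim E c x (vr k))
    (Et : Set (ι × ι))
    (hEt : ∀ p : ι × ι, p ∈ Et ↔ p.1 ≠ p.2 ∧
      ∃ u v : V, (u, v) ∈ E ∧ Sim E c u (vr p.1) ∧ Sim E c v (vr p.2))
    (ct : ι → ι → ℝ)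
    (hct : ∀ k q : ι, (k, q) ∈ Et →
      IsLeast { w : ℝ | ∃ u v : V, (u, v) ∈ E ∧ Sim E c u (vr k) ∧ Sim E c v (vr q) ∧
        ∃ a b : ℝ, IsMinWalkWeight E c (vr k) u a ∧ IsMinWalkWeight E c v (vr q) b ∧
          w = a + c u v + b } (ct k q)) :
    ∀ l : List ι, IsCycle Et l → 0 < walkWeight ct l := by
  intro l hl
  obtain ⟨⟨⟨-, hch⟩, hlen, hcl⟩, -⟩ := hl
  match l, hlen with
  | k0 :: k1 :: rest, _ =>
    have hcl' : (k1 :: rest).getLast? = some k0 := by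
      rw [← List.getLast?_cons_cons (a := k0), ← hcl]; rfl
    have hedge : (k0, k1) ∈ Et := (List.isChain_cons_cons.mp hch).1
    have hne : k0 ≠ k1 := ((hEt (k0, k1)).mp hedge).1
    obtain ⟨We, hWe, hwe, hlenWe⟩ := edge_walk hct hedge
    obtain ⟨Wr, hWr, hwr⟩ := list_walk hct rest k1 k0 (List.isChain_cons_cons.mp hch).2 hcl'
    obtain ⟨hW, hw⟩ := walk_concat (c := c) hWe hWr
    have hwtot : walkWeight c (We ++ Wr.tail) = walkWeight ct (k0 :: k1 :: rest) := by
      rw [hw, hwe, hwr, walkWeight_cons_cons]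
    have hclosed : IsClosedWalk E (We ++ Wr.tail) := by
      refine ⟨hW.1, ?_, ?_⟩
      · calc 2 ≤ We.length := hlenWe
          _ ≤ _ := by simp
      · rw [hW.2.1, hW.2.2]
    have hge : 0 ≤ walkWeight c (We ++ Wr.tail) := hnn _ hclosed
    rcases lt_or_eq_of_le hge with hlt | heq
    · rw [← hwtot]; exact hlt
    · exfalso
      have hmem0 : vr k0 ∈ We ++ Wr.tail := mem_of_head?_eq hW.2.1
      have hmem1 : vr k1 ∈ We ++ Wr.tail :=
        List.mem_append_left _ (mem_of_getLast?_eq hWe.2.2)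
      have hsim1 : Sim E c (vr k0) (vr k1) :=
        Or.inr ⟨_, hclosed, heq.symm, hmem0, hmem1⟩
      have hsim0 : Sim E c (vr k0) (vr k0) := Or.inl rfl
      obtain ⟨k, -, huniq⟩ := hrep (vr k0)
      exact hne ((huniq k0 hsim0).trans (huniq k1 hsim1).symm)
end

section
/- Let G = (V,E,c) be an edge-weighted directed graph without negative-weight closed walks, let d_{ij} be the minimum walk weight from i to j, and let R be a redundant edge set of G. If (i,j) ∈ E satisfies c_{ij} > d_{ij}, then R ∪ {(i,j)} is also a redundant edge set of G. -/
section Helpers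
variable {V : Type*}

lemma ww_single (c : V → V → ℝ) (a : V) : walkWeight c [a] = 0 := by
  simp [walkWeight]

lemma ww_cons (c : V → V → ℝ) (a b : V) (l : List V) :
    walkWeight c (a :: b :: l) = c a b + walkWeight c (b :: l) := by
  simp [walkWeight]

lemma ww_append (c : V → V → ℝ) (x : V) :
    ∀ (l1 : List V), l1.getLast? = some x → ∀ t : List V,
      walkWeight c (l1 ++ t) = walkWeight c l1 + walkWeight c (x :: t)
  | [], h => by simp at h
  | [a], h => by
    intro t
    simp at h
    subst h
    simp [ww_single]
  | a :: b :: l1, h => by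
    intro t
    rw [List.getLast?_cons_cons] at h
    have IH := ww_append c x (b :: l1) h t
    simp only [List.cons_append] at *
    rw [ww_cons, ww_cons, IH]
    ring

lemma walkFrom_glue {E : Set (V × V)} (c : V → V → ℝ) {a b v : V} {m1 m2 : List V}
    (h1 : IsWalkFrom E a b m1) (h2 : IsWalkFrom E b v m2) :
    IsWalkFrom E a v (m1 ++ m2.tail) ∧
      walkWeight c (m1 ++ m2.tail) = walkWeight c m1 + walkWeight c m2 := by
  obtain ⟨⟨hne1, hch1⟩, hh1, hl1⟩ := h1
  obtain ⟨⟨hne2, hch2⟩, hh2, hl2⟩ := h2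
  obtain ⟨t, rfl⟩ : ∃ t, m2 = b :: t := by
    cases m2 with
    | nil => simp at hh2
    | cons x t => simp at hh2; exact ⟨t, by rw [hh2]⟩
  simp only [List.tail_cons]
  have hww := ww_append c b m1 hl1 t
  refine ⟨⟨⟨by simp [hne1], ?_⟩, ?_, ?_⟩, hww⟩
  · rw [List.Chain', List.isChain_append]
    refine ⟨hch1, hch2.tail, ?_⟩
    intro x hx y hy
    rw [hl1, Option.mem_def, Option.some.injEq] at hx
    subst hx
    rw [List.Chain', List.isChain_cons] at hch2
    exact hch2.1 y hy
  · rw [List.head?_append]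
    cases m1 with
    | nil => exact absurd rfl hne1
    | cons p q => simpa using hh1
  · cases t with
    | nil =>
      simp only [List.append_nil]
      rw [hl1]
      simpa using hl2
    | cons p q =>
      rw [List.getLast?_append]
      rw [List.getLast?_cons_cons] at hl2
      simp [hl2]

lemma transfer {E1 E2 : Set (V × V)} {c : V → V → ℝ}
    (hf : ∀ a b : V, (a, b) ∈ E1 → ∃ m, IsWalkFrom E2 a b m ∧ walkWeight c m ≤ c a b) :
    ∀ (l : List V) (u v : V), IsWalkFrom E1 u v l →
      ∃ m, IsWalkFrom E2 u v m ∧ walkWeight c m ≤ walkWeight c l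
  | [], u, v, h => by simp [IsWalkFrom, IsWalk] at h
  | [a], u, v, h => by
    obtain ⟨⟨_, _⟩, hh, hl⟩ := h
    simp at hh hl
    subst hh; subst hl
    exact ⟨[a], ⟨⟨by simp, List.isChain_singleton a⟩, by simp, by simp⟩, le_refl _⟩
  | a :: b :: r, u, v, h => by
    obtain ⟨⟨_, hch⟩, hh, hl⟩ := h
    simp at hh
    subst hh
    rw [List.Chain', List.isChain_cons_cons] at hch
    obtain ⟨m1, hm1, hm1w⟩ := hf a b hch.1
    rw [List.getLast?_cons_cons] at hl
    obtain ⟨m2, hm2, hm2w⟩ :=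
      transfer hf (b :: r) b v ⟨⟨by simp, hch.2⟩, by simp, hl⟩
    obtain ⟨hglue, hgw⟩ := walkFrom_glue c hm1 hm2
    exact ⟨m1 ++ m2.tail, hglue, by rw [hgw, ww_cons]; exact add_le_add hm1w hm2w⟩

lemma closed_nonneg {E E' : Set (V × V)} {c : V → V → ℝ}
    (hnn : ∀ l : List V, IsClosedWalk E l → 0 ≤ walkWeight c l)
    (hsub : E' ⊆ E) {u : V} {l : List V} (h : IsWalkFrom E' u u l) :
    0 ≤ walkWeight c l := by
  obtain ⟨⟨hne, hch⟩, hh, hl⟩ := h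
  match l with
  | [] => exact absurd rfl hne
  | [a] => rw [ww_single]
  | a :: b :: r =>
    apply hnn
    refine ⟨⟨hne, hch.imp fun x y hxy => hsub hxy⟩, by simp [Nat.le_add_left], ?_⟩
    rw [hh, hl]

lemma exists_split {E' : Set (V × V)} {i j : V} :
    ∀ l : List V, l.Chain' (fun a b => (a, b) ∈ E') →
      ¬ l.Chain' (fun a b => (a, b) ∈ E' \ {(i, j)}) →
      ∃ l1 l2, l = l1 ++ i :: j :: l2
  | [], _, hc => absurd List.isChain_nil hc
  | [a], _, hc => absurd (List.isChain_singleton a) hc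
  | a :: b :: r, hch, hc => by
    rw [List.Chain', List.isChain_cons_cons] at hch
    by_cases hab : (a, b) = (i, j)
    · obtain ⟨rfl, rfl⟩ := Prod.mk.injEq .. ▸ hab
      exact ⟨[], r, by simp⟩
    · have : ¬ (b :: r).Chain' (fun a b => (a, b) ∈ E' \ {(i, j)}) := by
        intro hcc
        exact hc (List.isChain_cons_cons.mpr ⟨⟨hch.1, hab⟩, hcc⟩)
      obtain ⟨l1, l2, heq⟩ := exists_split (b :: r) hch.2 this
      exact ⟨a :: l1, l2, by rw [heq]; simp⟩

lemma split_weight {E E' : Set (V × V)} {c : V → V → ℝ}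
    (hnn : ∀ l : List V, IsClosedWalk E l → 0 ≤ walkWeight c l)
    (hsub : E' ⊆ E) {i j : V} {l1 l2 : List V}
    (h : IsWalkFrom E' i j (l1 ++ i :: j :: l2)) :
    c i j ≤ walkWeight c (l1 ++ i :: j :: l2) := by
  obtain ⟨⟨hne, hch⟩, hh, hl⟩ := h
  have hA : l1 ++ i :: j :: l2 = (l1 ++ [i]) ++ (j :: l2) := by simp
  rw [hA] at hch
  rw [List.Chain', List.isChain_append] at hch
  have hwwA : walkWeight c ((l1 ++ [i]) ++ (j :: l2))
      = walkWeight c (l1 ++ [i]) + walkWeight c (i :: j :: l2) :=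
    ww_append c i (l1 ++ [i]) List.getLast?_concat (j :: l2)
  have hpre : IsWalkFrom E' i i (l1 ++ [i]) := by
    refine ⟨⟨by simp, hch.1⟩, ?_, List.getLast?_concat⟩
    cases l1 with
    | nil => simp
    | cons x r =>
      simp only [List.cons_append, List.head?_cons, Option.some.injEq] at hh ⊢
      exact hh
  have hsuf : IsWalkFrom E' j j (j :: l2) := by
    refine ⟨⟨by simp, hch.2.1⟩, by simp, ?_⟩
    rw [hA, List.getLast?_append] at hl
    simp at hl
    cases h : (j :: l2).getLast? with
    | none => simp at h
    | some w => rw [h] at hl; simpa using hl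
  have h1 := closed_nonneg hnn hsub hpre
  have h2 := closed_nonneg hnn hsub hsuf
  rw [hA, hwwA, ww_cons]
  linarith

lemma pathify {E E' : Set (V × V)} {c : V → V → ℝ}
    (hnn : ∀ l : List V, IsClosedWalk E l → 0 ≤ walkWeight c l)
    (hsub : E' ⊆ E) :
    ∀ (n : ℕ) (l : List V), l.length ≤ n → ∀ u v : V, IsWalkFrom E' u v l →
      ∃ p, IsWalkFrom E' u v p ∧ p.Nodup ∧ walkWeight c p ≤ walkWeight c l ∧
        ∀ x ∈ p, x ∈ l := by
  intro n
  induction n with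
  | zero =>
    intro l hlen u v h
    rw [Nat.le_zero, List.length_eq_zero_iff] at hlen
    subst hlen
    exact absurd rfl h.1.1
  | succ n IH =>
    intro l hlen u v h
    obtain ⟨⟨hne, hch⟩, hh, hl⟩ := h
    match l, hne with
    | a :: rest, _ =>
      simp only [List.head?_cons, Option.some.injEq] at hh
      subst hh
      by_cases hmem : a ∈ rest
      · obtain ⟨r1, r2, rfl⟩ := List.append_of_mem hmem
        have hA : a :: (r1 ++ a :: r2) = ((a :: r1) ++ [a]) ++ r2 := by simp
        have hch' := hch
        rw [hA, List.Chain', List.isChain_append] at hch'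
        have hpre : IsWalkFrom E' a a ((a :: r1) ++ [a]) :=
          ⟨⟨by simp, hch'.1⟩, by simp, List.getLast?_concat⟩
        have hnew : IsWalkFrom E' a v (a :: r2) := by
          refine ⟨⟨by simp, ?_⟩, by simp, ?_⟩
          · rw [List.Chain', List.isChain_cons]
            refine ⟨?_, hch'.2.1⟩
            intro y hy
            exact hch'.2.2 a (by rw [List.getLast?_concat]; rfl) y hy
          · have : a :: (r1 ++ a :: r2) = (a :: r1) ++ (a :: r2) := by simp
            rw [this, List.getLast?_append] at hl
            simpa using hl
        have hlen' : (a :: r2).length ≤ n := by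
          simp only [List.length_cons, List.length_append] at hlen ⊢
          omega
        obtain ⟨p, hp, hnd, hpw, hsubp⟩ := IH (a :: r2) hlen' a v hnew
        refine ⟨p, hp, hnd, ?_, ?_⟩
        · have hww : walkWeight c (a :: (r1 ++ a :: r2))
              = walkWeight c ((a :: r1) ++ [a]) + walkWeight c (a :: r2) := by
            rw [hA]
            exact ww_append c a ((a :: r1) ++ [a]) List.getLast?_concat r2
          have h0 := closed_nonneg hnn hsub hpre
          rw [hww]
          linarith
        · intro x hx
          have := hsubp x hx
          simp at this ⊢
          tauto
      · match rest with
        | [] =>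
          simp at hl
          subst hl
          exact ⟨[a], ⟨⟨by simp, List.isChain_singleton a⟩, by simp, by simp⟩, by simp, le_refl _, by simp⟩
        | b :: r =>
          rw [List.Chain', List.isChain_cons_cons] at hch
          rw [List.getLast?_cons_cons] at hl
          obtain ⟨p, hp, hnd, hpw, hsubp⟩ := IH (b :: r)
            (by simpa using Nat.le_of_succ_le_succ hlen) b v ⟨⟨by simp, hch.2⟩, by simp, hl⟩
          obtain ⟨t, rfl⟩ : ∃ t, p = b :: t := by
            cases p with
            | nil => simp [IsWalkFrom] at hp
            | cons x t =>
              obtain ⟨_, hh2, _⟩ := hp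
              simp at hh2
              exact ⟨t, by rw [hh2]⟩
          have hanp : a ∉ b :: t := fun hc => hmem (hsubp a hc)
          refine ⟨a :: b :: t, ?_, ?_, ?_, ?_⟩
          · obtain ⟨⟨_, hchp⟩, _, hlp⟩ := hp
            exact ⟨⟨by simp, List.isChain_cons_cons.mpr ⟨hch.1, hchp⟩⟩, by simp,
              by rw [List.getLast?_cons_cons]; exact hlp⟩
          · exact List.nodup_cons.mpr ⟨hanp, hnd⟩
          · rw [ww_cons, ww_cons]
            linarith
          · intro x hx
            simp at hx ⊢
            rcases hx with rfl | hx | hx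
            · tauto
            · subst hx; have := hsubp x (by simp); simp at this; tauto
            · have := hsubp x (by simp [hx]); simp at this; tauto

end Helpers
theorem stmt16 {V : Type*} (E : Set (V × V)) (c : V → V → ℝ)
    (hnn : ∀ l : List V, IsClosedWalk E l → 0 ≤ walkWeight c l)
    (R : Set (V × V)) (hR : IsRedundantEdgeSet E c R)
    (i j : V) (hij : (i, j) ∈ E) (dij : ℝ)
    (hd : IsMinWalkWeight E c i j dij) (hgt : dij < c i j) :
    IsRedundantEdgeSet E c (R ∪ {(i, j)}) := by
  obtain ⟨hRE, hRrep⟩ := hR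
  have hsetE : E \ (R ∪ {(i, j)}) = (E \ R) \ {(i, j)} := by
    ext e
    simp [Set.mem_diff, and_assoc]
    tauto
  have hsub1 : E \ R ⊆ E := Set.diff_subset
  have hsub2 : E \ (R ∪ {(i, j)}) ⊆ E := Set.diff_subset
  have fix1 : ∀ a b : V, (a, b) ∈ E →
      ∃ m, IsWalkFrom (E \ R) a b m ∧ walkWeight c m ≤ c a b := by
    intro a b hab
    by_cases hr : (a, b) ∈ R
    · obtain ⟨l, ⟨hw, _⟩, hle⟩ := hRrep (a, b) hr
      exact ⟨l, hw, hle⟩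
    · refine ⟨[a, b], ⟨⟨by simp, ?_⟩, by simp, by simp⟩, by rw [ww_cons, ww_single]; simp⟩
      simp only [List.Chain', List.isChain_cons_cons, List.isChain_singleton, and_true]
      exact ⟨hab, hr⟩
  obtain ⟨⟨l0, hl0, hl0w⟩, _⟩ := hd
  obtain ⟨W, hW, hWw⟩ := transfer fix1 l0 i j hl0
  have hWd : walkWeight c W ≤ dij := by rw [← hl0w]; exact hWw
  have hW'' : ∃ m, IsWalkFrom (E \ (R ∪ {(i, j)})) i j m ∧ walkWeight c m ≤ dij := by
    by_cases hr : (i, j) ∈ R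
    · have hEq : R ∪ {(i, j)} = R := Set.union_eq_self_of_subset_right (by simpa using hr)
      rw [hEq]
      exact ⟨W, hW, hWd⟩
    · refine ⟨W, ⟨⟨hW.1.1, ?_⟩, hW.2.1, hW.2.2⟩, hWd⟩
      rw [hsetE]
      by_contra hc
      obtain ⟨l1, l2, heq⟩ := exists_split W hW.1.2 hc
      rw [heq] at hW hWd
      have := split_weight hnn hsub1 hW
      linarith
  obtain ⟨W2, hW2, hW2w⟩ := hW''
  constructor
  · exact Set.union_subset hRE (by simpa using hij)
  · intro e he
    have hwalk : ∃ m, IsWalkFrom (E \ (R ∪ {(i, j)})) e.1 e.2 m ∧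
        walkWeight c m ≤ c e.1 e.2 := by
      rcases he with he | he
      · obtain ⟨l, ⟨hw, _⟩, hle⟩ := hRrep e he
        have fix2 : ∀ a b : V, (a, b) ∈ E \ R →
            ∃ m, IsWalkFrom (E \ (R ∪ {(i, j)})) a b m ∧ walkWeight c m ≤ c a b := by
          intro a b hab
          by_cases hij2 : (a, b) = (i, j)
          · obtain ⟨rfl, rfl⟩ := Prod.mk.injEq .. ▸ hij2
            exact ⟨W2, hW2, hW2w.trans hgt.le⟩
          · refine ⟨[a, b], ⟨⟨by simp, ?_⟩, by simp, by simp⟩,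
              by rw [ww_cons, ww_single]; simp⟩
            simp only [List.Chain', List.isChain_cons_cons, List.isChain_singleton, and_true]
            rw [hsetE]
            exact ⟨hab, hij2⟩
        obtain ⟨m, hm, hmw⟩ := transfer fix2 l e.1 e.2 hw
        exact ⟨m, hm, hmw.trans hle⟩
      · have he' : e = (i, j) := he
        subst he'
        exact ⟨W2, hW2, hW2w.trans hgt.le⟩
    obtain ⟨m, hm, hmw⟩ := hwalk
    obtain ⟨p, hp, hnd, hpw, _⟩ := pathify hnn hsub2 m.length m le_rfl e.1 e.2 hm
    exact ⟨p, ⟨hp, hnd⟩, hpw.trans hmw⟩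
end
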